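/- Let n, k be natural numbers, let L be a real n×n matrix, let M be a real n×k matrix, and let P = [I | M] be the real n×(n+k) block matrix whose first n columns form the identity matrix and whose last k columns are M. Then for every b ∈ ℝⁿ and every x̃ ∈ ℝ^{n+k}, if (Pᵀ L P) x̃ = Pᵀ b, then the vector x = P x̃ satisfies L x = b. -/

import Mathlib

open Matrix

lemma transpose_fromColumns_mulVec_inl {n k : ℕ} (M : Matrix (Fin n) (Fin k) ℝ)
    (v : Fin n → ℝ) (i : Fin n) :
    ((Matrix.fromCols (1 : Matrix (Fin n) (Fin n) ℝ) M)ᵀ.mulVec v) (Sum.inl i) = v i := by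
  simp [mulVec, dotProduct, fromCols, Matrix.one_apply, Finset.sum_ite_eq, mul_comm]

/-- If `P = [I | M]`, `b ∈ ℝⁿ`, `xt ∈ ℝ^{n+k}` and `(Pᵀ L P) xt = Pᵀ b`, then
`x = P xt` satisfies `L x = b`. -/
theorem expanded_system_solution (n k : ℕ)
    (L : Matrix (Fin n) (Fin n) ℝ) (M : Matrix (Fin n) (Fin k) ℝ)
    (P : Matrix (Fin n) (Fin n ⊕ Fin k) ℝ)
    (hP : P = Matrix.fromCols 1 M)
    (b : Fin n → ℝ) (xt : Fin n ⊕ Fin k → ℝ)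
    (h : (Pᵀ * L * P).mulVec xt = Pᵀ.mulVec b) :
    L.mulVec (P.mulVec xt) = b := by
  have h' : Pᵀ.mulVec (L.mulVec (P.mulVec xt)) = Pᵀ.mulVec b := by
    rw [← h]; simp [← mulVec_mulVec]
  funext i
  have := congrFun h' (Sum.inl i)
  rw [hP] at this
  rw [hP]; rwa [transpose_fromColumns_mulVec_inl, transpose_fromColumns_mulVec_inl] at this
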